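/- If β ≤ 1, then the convex hull of F(ℝ₊ⁿ) equals {(x,z) ∈ ℝ₊ⁿ × ℝ : ℓ ≤ z ≤ u and z ≤ ∏_{i=1}^n xᵢ^{aᵢ}}. -/

import Mathlib

open Real Finset
set_option maxHeartbeats 1000000

lemma amgm_sub1 {n : ℕ} (w p : Fin n → ℝ) (hw : ∀ i, 0 ≤ w i) (hp : ∀ i, 0 ≤ p i)
    (hw1 : ∑ i, w i ≤ 1) : ∏ i, p i ^ w i ≤ (1 - ∑ i, w i) + ∑ i, w i * p i := by
  have h := Real.geom_mean_le_arith_mean_weighted (Finset.univ : Finset (Fin (n+1)))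
    (Fin.cons (1 - ∑ i, w i) w) (Fin.cons 1 p)
    (by
      intro i _
      refine Fin.cases ?_ ?_ i
      · simpa using by linarith
      · intro j; simpa using hw j)
    (by simp [Fin.sum_univ_succ])
    (by
      intro i _
      refine Fin.cases ?_ ?_ i
      · simp
      · intro j; simpa using hp j)
  simpa [Fin.prod_univ_succ, Fin.sum_univ_succ] using h

lemma prod_rpow_concave {n : ℕ} (a : Fin n → ℝ) (ha : ∀ i, 0 < a i) (hβ : ∑ i, a i ≤ 1)
    (x y : Fin n → ℝ) (hx : ∀ i, 0 ≤ x i) (hy : ∀ i, 0 ≤ y i)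
    (t s : ℝ) (ht : 0 ≤ t) (hs : 0 ≤ s) (hts : t + s = 1) :
    t * ∏ i, x i ^ a i + s * ∏ i, y i ^ a i ≤ ∏ i, (t * x i + s * y i) ^ a i := by
  by_cases hall : ∀ i, 0 < t * x i + s * y i
  · set d : Fin n → ℝ := fun i => t * x i + s * y i with hd
    have hD : 0 < ∏ i, d i ^ a i :=
      Finset.prod_pos fun i _ => Real.rpow_pos_of_pos (hall i) _
    set D := ∏ i, d i ^ a i
    have key : ∀ (v : Fin n → ℝ), (∀ i, 0 ≤ v i) →
        ∏ i, v i ^ a i ≤ ((1 - ∑ i, a i) + ∑ i, a i * (v i / d i)) * D := by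
      intro v hv
      have h1 : ∏ i, v i ^ a i = (∏ i, (v i / d i) ^ a i) * D := by
        rw [← Finset.prod_mul_distrib]
        refine Finset.prod_congr rfl fun i _ => ?_
        rw [← Real.mul_rpow (div_nonneg (hv i) (hall i).le) (hall i).le,
          div_mul_cancel₀ _ (hall i).ne']
      rw [h1]
      refine mul_le_mul_of_nonneg_right ?_ hD.le
      exact amgm_sub1 a (fun i => v i / d i) (fun i => (ha i).le)
        (fun i => div_nonneg (hv i) (hall i).le) hβ
    have hkx := key x hx
    have hky := key y hy
    have hsum : t * ∑ i, a i * (x i / d i) + s * ∑ i, a i * (y i / d i) = ∑ i, a i := by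
      rw [Finset.mul_sum, Finset.mul_sum, ← Finset.sum_add_distrib]
      refine Finset.sum_congr rfl fun i _ => ?_
      have hdi := (hall i).ne'
      calc t * (a i * (x i / d i)) + s * (a i * (y i / d i))
          = a i * ((t * x i + s * y i) / d i) := by ring
        _ = a i := by rw [show (t * x i + s * y i) / d i = 1 from div_self hdi, mul_one]
    calc t * ∏ i, x i ^ a i + s * ∏ i, y i ^ a i
        ≤ t * (((1 - ∑ i, a i) + ∑ i, a i * (x i / d i)) * D)
          + s * (((1 - ∑ i, a i) + ∑ i, a i * (y i / d i)) * D) :=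
          add_le_add (mul_le_mul_of_nonneg_left hkx ht) (mul_le_mul_of_nonneg_left hky hs)
      _ = ((t + s) * (1 - ∑ i, a i)
            + (t * ∑ i, a i * (x i / d i) + s * ∑ i, a i * (y i / d i))) * D := by ring
      _ = D := by rw [hsum, hts]; ring
  · push_neg at hall
    obtain ⟨i, hi⟩ := hall
    have hi0 : t * x i + s * y i = 0 :=
      le_antisymm hi (add_nonneg (mul_nonneg ht (hx i)) (mul_nonneg hs (hy i)))
    have htx : t * x i = 0 ∧ s * y i = 0 := by
      constructor <;> nlinarith [mul_nonneg ht (hx i), mul_nonneg hs (hy i)]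
    have hR : 0 ≤ ∏ i, (t * x i + s * y i) ^ a i :=
      Finset.prod_nonneg fun j _ => Real.rpow_nonneg (add_nonneg (mul_nonneg ht (hx j)) (mul_nonneg hs (hy j))) _
    have h1 : t * ∏ i, x i ^ a i = 0 := by
      rcases mul_eq_zero.1 htx.1 with h | h
      · rw [h, zero_mul]
      · rw [Finset.prod_eq_zero (Finset.mem_univ i)
          (by rw [h]; exact Real.zero_rpow (ha i).ne'), mul_zero]
    have h2 : s * ∏ i, y i ^ a i = 0 := by
      rcases mul_eq_zero.1 htx.2 with h | h
      · rw [h, zero_mul]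
      · rw [Finset.prod_eq_zero (Finset.mem_univ i)
          (by rw [h]; exact Real.zero_rpow (ha i).ne'), mul_zero]
    rw [h1, h2]; simpa using hR


lemma mem_hull_aux {n : ℕ} (hn : 2 ≤ n) (a : Fin n → ℝ) (ha : ∀ i, 0 < a i)
    (ℓ u : ℝ) (hℓ : 0 < ℓ)
    (x : Fin n → ℝ) (z : ℝ) (hx : ∀ k, 0 ≤ x k) (hz1 : ℓ ≤ z) (hz2 : z ≤ u)
    (hz3 : z ≤ ∏ i, x i ^ a i) :
    ((x, z) : (Fin n → ℝ) × ℝ) ∈ convexHull ℝ {xz : (Fin n → ℝ) × ℝ | (∀ k, 0 ≤ xz.1 k) ∧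
        ℓ ≤ ∏ i, xz.1 i ^ a i ∧ (∏ i, xz.1 i ^ a i) ≤ u ∧ xz.2 = ∏ i, xz.1 i ^ a i} := by
  have hz0 : 0 < z := lt_of_lt_of_le hℓ hz1
  have hxpos : ∀ i, 0 < x i := by
    intro i
    rcases lt_or_eq_of_le (hx i) with h | h
    · exact h
    · exfalso
      have : ∏ j, x j ^ a j = 0 :=
        Finset.prod_eq_zero (Finset.mem_univ i) (by rw [← h]; exact Real.zero_rpow (ha i).ne')
      linarith
  set F := ∏ i, x i ^ a i with hFdef
  have hF : 0 < F := Finset.prod_pos fun i _ => Real.rpow_pos_of_pos (hxpos i) _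
  set i0 : Fin n := ⟨0, by omega⟩ with hi0
  set i1 : Fin n := ⟨1, by omega⟩ with hi1
  have hne : i0 ≠ i1 := by simp [hi0, hi1, Fin.ext_iff]
  have ha0 : 0 < a i0 := ha i0
  have ha1 : 0 < a i1 := ha i1
  set c : ℝ := (z / F) ^ (a i1)⁻¹ with hcdef
  have hc0 : 0 < c := Real.rpow_pos_of_pos (div_pos hz0 hF) _
  have hc1 : c ≤ 1 :=
    Real.rpow_le_one (div_nonneg hz0.le hF.le) ((div_le_one hF).2 hz3) (inv_nonneg.2 ha1.le)
  set φ : ℝ → ℝ := fun s => c * s ^ (-(a i0 / a i1)) with hφdef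
  have hφnn : ∀ s : ℝ, 0 ≤ s → 0 ≤ φ s := fun s hs =>
    mul_nonneg hc0.le (Real.rpow_nonneg hs _)
  set y : ℝ → (Fin n → ℝ) := fun s i => if i = i0 then s * x i0 else
    if i = i1 then φ s * x i1 else x i with hydef
  have hynn : ∀ s : ℝ, 0 < s → ∀ i, 0 ≤ y s i := by
    intro s hs i
    simp only [hydef]
    split
    · exact mul_nonneg hs.le (hx i0)
    split
    · exact mul_nonneg (hφnn s hs.le) (hx i1)
    · exact hx i
  have hφpow : ∀ s : ℝ, 0 < s → (φ s) ^ a i1 = (z / F) * (s ^ a i0)⁻¹ := by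
    intro s hs
    have h1 : (s ^ (-(a i0 / a i1))) ^ a i1 = s ^ ((-(a i0 / a i1)) * a i1) :=
      (Real.rpow_mul hs.le _ _).symm
    have h2 : (-(a i0 / a i1)) * a i1 = -(a i0) := by field_simp
    have h3 : c ^ a i1 = z / F := by
      rw [hcdef, ← Real.rpow_mul (div_nonneg hz0.le hF.le),
        inv_mul_cancel₀ ha1.ne', Real.rpow_one]
    rw [hφdef]
    rw [Real.mul_rpow hc0.le (Real.rpow_nonneg hs.le _), h1, h2, h3,
      Real.rpow_neg hs.le]
  have hprod : ∀ s : ℝ, 0 < s → ∏ i, y s i ^ a i = z := by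
    intro s hs
    set g : Fin n → ℝ := fun i => if i = i0 then s ^ a i0 else
      if i = i1 then (φ s) ^ a i1 else 1 with hgdef
    have step1 : ∏ i, y s i ^ a i = (∏ i, g i) * F := by
      rw [hFdef, ← Finset.prod_mul_distrib]
      refine Finset.prod_congr rfl fun i _ => ?_
      simp only [hydef, hgdef]
      by_cases h : i = i0
      · subst h; simp only [if_pos rfl]
        exact Real.mul_rpow hs.le (hx i0)
      by_cases h' : i = i1
      · subst h'; simp only [if_neg h, if_pos rfl]
        exact Real.mul_rpow (hφnn s hs.le) (hx i1)
      · simp [h, h']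
    have step2 : ∏ i, g i = g i0 * g i1 := by
      rw [← Finset.mul_prod_erase Finset.univ g (Finset.mem_univ i0),
        ← Finset.mul_prod_erase _ g
          (Finset.mem_erase.2 ⟨Ne.symm hne, Finset.mem_univ i1⟩)]
      have : ∏ i ∈ (Finset.univ.erase i0).erase i1, g i = 1 := by
        refine Finset.prod_eq_one fun i hi => ?_
        rw [Finset.mem_erase, Finset.mem_erase] at hi
        simp [hgdef, hi.2.1, hi.1]
      rw [this, mul_one]
    have hg0 : g i0 = s ^ a i0 := by simp [hgdef]
    have hg1 : g i1 = (φ s) ^ a i1 := by simp [hgdef, Ne.symm hne]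
    rw [step1, step2, hg0, hg1, hφpow s hs]
    have hs0 : (s : ℝ) ^ a i0 ≠ 0 := (Real.rpow_pos_of_pos hs _).ne'
    field_simp
  -- IVT part
  set h : ℝ → ℝ := fun s => (2 - s)⁻¹ * φ s + ((1 - s) * (2 - s)⁻¹) * φ 2 with hhdef
  set s₀ : ℝ := min (1/2) ((c/2) ^ (a i1 / a i0)) with hs₀def
  have hs₀pos : 0 < s₀ :=
    lt_min (by norm_num) (Real.rpow_pos_of_pos (by linarith) _)
  have hs₀le : s₀ ≤ 1/2 := min_le_left _ _
  have hs₀le1 : s₀ ≤ 1 := hs₀le.trans (by norm_num)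
  have hφ1 : φ 1 = c := by simp [hφdef]
  have hh1 : h 1 = c := by simp only [hhdef]; rw [hφ1]; norm_num
  have hφs₀ : 2 ≤ φ s₀ := by
    have hmono : s₀ ^ (-(a i0 / a i1)) ≥ ((c/2) ^ (a i1 / a i0)) ^ (-(a i0 / a i1)) :=
      Real.rpow_le_rpow_of_nonpos hs₀pos (min_le_right _ _)
        (neg_nonpos.2 (div_nonneg ha0.le ha1.le))
    have hcalc : ((c/2) ^ (a i1 / a i0)) ^ (-(a i0 / a i1)) = 2 / c := by
      rw [← Real.rpow_mul (by linarith : (0:ℝ) ≤ c/2)]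
      have : a i1 / a i0 * -(a i0 / a i1) = -1 := by field_simp
      rw [this, Real.rpow_neg_one]
      field_simp
    have : φ s₀ ≥ c * (2 / c) := by
      rw [hφdef]
      exact mul_le_mul_of_nonneg_left (hcalc ▸ hmono) hc0.le
    rwa [mul_div_cancel₀ _ hc0.ne'] at this
  have hhs₀ : 1 ≤ h s₀ := by
    have h1 : (1:ℝ)/2 ≤ (2 - s₀)⁻¹ := by
      rw [le_inv_comm₀ (by norm_num) (by linarith)]
      linarith
    have h2 : 0 ≤ ((1 - s₀) * (2 - s₀)⁻¹) * φ 2 := by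
      apply mul_nonneg (mul_nonneg (by linarith) (by positivity))
      exact hφnn 2 (by norm_num)
    have h3 : (2 - s₀)⁻¹ * φ s₀ ≥ (1/2) * 2 :=
      mul_le_mul h1 hφs₀ (by norm_num) (by positivity)
    simp only [hhdef]
    nlinarith
  have hcont : ContinuousOn h (Set.Icc s₀ 1) := by
    have hφc : ContinuousOn φ (Set.Icc s₀ 1) := by
      apply continuousOn_const.mul
      exact continuousOn_id.rpow_const fun w hw => Or.inl (by
        simp only [id]
        exact (lt_of_lt_of_le hs₀pos hw.1).ne')
    have hinv : ContinuousOn (fun s : ℝ => (2 - s)⁻¹) (Set.Icc s₀ 1) := by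
      apply ContinuousOn.inv₀ (continuousOn_const.sub continuousOn_id)
      intro w hw
      have := hw.2
      intro h0
      have : (2:ℝ) - w = 0 → False := by intro hh; nlinarith [hw.2]
      exact this h0
    exact (hinv.mul hφc).add
      (((continuousOn_const.sub continuousOn_id).mul hinv).mul continuousOn_const)
  obtain ⟨s₁, hs₁mem, hs₁⟩ :=
    intermediate_value_Icc' hs₀le1 hcont (by rw [hh1]; exact ⟨hc1, hhs₀⟩)
  have hs₁pos : 0 < s₁ := lt_of_lt_of_le hs₀pos hs₁mem.1
  have hs₁le1 : s₁ ≤ 1 := hs₁mem.2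
  set t : ℝ := (2 - s₁)⁻¹ with htdef
  have h2s₁ : (0:ℝ) < 2 - s₁ := by linarith
  have ht0 : 0 < t := inv_pos.2 h2s₁
  have ht1 : t ≤ 1 := by
    rw [htdef, inv_le_one_iff₀]; right; linarith
  have htm : t * (2 - s₁) = 1 := inv_mul_cancel₀ h2s₁.ne'
  have homt : 1 - t = (1 - s₁) * (2 - s₁)⁻¹ := by
    field_simp
    nlinarith [htm]
  have hcoef : t * φ s₁ + (1 - t) * φ 2 = 1 := by
    rw [homt]; exact hs₁
  set p : (Fin n → ℝ) × ℝ := (y s₁, z) with hpdef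
  set q : (Fin n → ℝ) × ℝ := (y 2, z) with hqdef
  have hprodp := hprod s₁ hs₁pos
  have hprodq := hprod 2 (by norm_num)
  have hpmem : p ∈ {xz : (Fin n → ℝ) × ℝ | (∀ k, 0 ≤ xz.1 k) ∧
      ℓ ≤ ∏ i, xz.1 i ^ a i ∧ (∏ i, xz.1 i ^ a i) ≤ u ∧ xz.2 = ∏ i, xz.1 i ^ a i} := by
    refine ⟨hynn s₁ hs₁pos, ?_, ?_, ?_⟩
    · rw [hprodp]; exact hz1
    · rw [hprodp]; exact hz2
    · rw [hprodp]
  have hqmem : q ∈ {xz : (Fin n → ℝ) × ℝ | (∀ k, 0 ≤ xz.1 k) ∧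
      ℓ ≤ ∏ i, xz.1 i ^ a i ∧ (∏ i, xz.1 i ^ a i) ≤ u ∧ xz.2 = ∏ i, xz.1 i ^ a i} := by
    refine ⟨hynn 2 (by norm_num), ?_, ?_, ?_⟩
    · rw [hprodq]; exact hz1
    · rw [hprodq]; exact hz2
    · rw [hprodq]
  have hxeq : ((x, z) : (Fin n → ℝ) × ℝ) = t • p + (1 - t) • q := by
    have hy0 : ∀ s : ℝ, y s i0 = s * x i0 := fun s => by simp [hydef]
    have hy1 : ∀ s : ℝ, y s i1 = φ s * x i1 := fun s => by simp [hydef, Ne.symm hne]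
    have hyo : ∀ (s : ℝ) i, i ≠ i0 → i ≠ i1 → y s i = x i := fun s i h h' => by
      simp [hydef, h, h']
    have hfst : x = t • (y s₁) + (1 - t) • (y 2) := by
      funext i
      rw [Pi.add_apply, Pi.smul_apply, Pi.smul_apply, smul_eq_mul, smul_eq_mul]
      by_cases hI : i = i0
      · subst hI
        rw [hy0, hy0]
        have hco : t * s₁ + (1 - t) * 2 = 1 := by nlinarith [htm]
        linear_combination (-(x i0)) * hco
      by_cases hJ : i = i1
      · subst hJ
        rw [hy1, hy1]
        linear_combination (-(x i1)) * hcoef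
      · rw [hyo s₁ i hI hJ, hyo 2 i hI hJ]; ring
    have hsnd : z = t * z + (1 - t) * z := by ring
    rw [hpdef, hqdef, Prod.smul_mk, Prod.smul_mk, Prod.mk_add_mk]
    exact Prod.ext hfst (by simpa using hsnd)
  rw [hxeq]
  exact (convex_convexHull ℝ _) (subset_convexHull ℝ _ hpmem)
    (subset_convexHull ℝ _ hqmem) ht0.le (by linarith) (by ring)

/-- If `β ≤ 1`, then `conv(F(ℝ₊ⁿ)) = F(ℝ₊ⁿ)^≤`. -/
theorem convexHull_F_eq_of_beta_le_one (n : ℕ) (hn : 2 ≤ n) (a : Fin n → ℝ)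
    (ha : ∀ i, 0 < a i) (ℓ u : ℝ) (hℓ : 0 < ℓ) (hℓu : ℓ < u)
    (β : ℝ) (hβ : β = ∑ i, a i) (hβ1 : β ≤ 1) :
    convexHull ℝ
      {xz : (Fin n → ℝ) × ℝ | (∀ k, 0 ≤ xz.1 k) ∧
        ℓ ≤ ∏ i, xz.1 i ^ a i ∧ (∏ i, xz.1 i ^ a i) ≤ u ∧
        xz.2 = ∏ i, xz.1 i ^ a i} =
    {xz : (Fin n → ℝ) × ℝ | (∀ k, 0 ≤ xz.1 k) ∧
        ℓ ≤ xz.2 ∧ xz.2 ≤ u ∧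
        xz.2 ≤ ∏ i, xz.1 i ^ a i} := by
  have hsum1 : ∑ i, a i ≤ 1 := hβ ▸ hβ1
  apply Set.Subset.antisymm
  · apply convexHull_min
    · rintro ⟨x, z⟩ ⟨h1, h2, h3, h4⟩
      exact ⟨h1, h4 ▸ h2, h4 ▸ h3, le_of_eq h4⟩
    · rintro ⟨x1, z1⟩ ⟨h1, h2, h3, h4⟩ ⟨x2, z2⟩ ⟨g1, g2, g3, g4⟩ t s ht hs hts
      rw [Prod.smul_mk, Prod.smul_mk, Prod.mk_add_mk]
      refine ⟨?_, ?_, ?_, ?_⟩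
      · intro k
        simp only [Pi.add_apply, Pi.smul_apply, smul_eq_mul]
        exact add_nonneg (mul_nonneg ht (h1 k)) (mul_nonneg hs (g1 k))
      · simp only [smul_eq_mul]
        nlinarith
      · simp only [smul_eq_mul]
        nlinarith
      · simp only [smul_eq_mul]
        have hcc := prod_rpow_concave a ha hsum1 x1 x2 h1 g1 t s ht hs hts
        have e : ∀ i, (t • x1 + s • x2) i = t * x1 i + s * x2 i := fun i => by
          simp [Pi.add_apply]
        calc t * z1 + s * z2 ≤ t * ∏ i, x1 i ^ a i + s * ∏ i, x2 i ^ a i := by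
              nlinarith
          _ ≤ ∏ i, (t * x1 i + s * x2 i) ^ a i := hcc
          _ = ∏ i, (t • x1 + s • x2) i ^ a i := by
              exact Finset.prod_congr rfl fun i _ => by rw [e i]
  · rintro ⟨x, z⟩ ⟨h1, h2, h3, h4⟩
    exact mem_hull_aux hn a ha ℓ u hℓ x z h1 h2 h3 h4
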